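/- Reciprocally convex combination inequality: let R₁, R₂ ∈ ℝ^{n×n} be symmetric and X ∈ ℝ^{n×n} be such that the 2n×2n block matrix [[R₁, X], [Xᵀ, R₂]] is positive semidefinite. Then for every real α with 0 < α < 1 and all vectors v₁, v₂ ∈ ℝⁿ, (1/α)·v₁ᵀR₁v₁ + (1/(1−α))·v₂ᵀR₂v₂ ≥ v₁ᵀR₁v₁ + v₂ᵀR₂v₂ + 2v₁ᵀXv₂. -/

import Mathlib

open Matrix

/-- **Reciprocally convex combination inequality.**
If the block matrix `[[R₁, X], [Xᵀ, R₂]]` is positive semidefinite, then for every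
`0 < α < 1` and all `v₁, v₂ ∈ ℝⁿ`,
`(1/α)v₁ᵀR₁v₁ + (1/(1−α))v₂ᵀR₂v₂ ≥ v₁ᵀR₁v₁ + v₂ᵀR₂v₂ + 2v₁ᵀXv₂`. -/
theorem reciprocally_convex {n : ℕ}
    (R₁ R₂ X : Matrix (Fin n) (Fin n) ℝ) (hR₁ : R₁.IsSymm) (hR₂ : R₂.IsSymm)
    (hpsd : ∀ v : (Fin n ⊕ Fin n) → ℝ, 0 ≤ v ⬝ᵥ (Matrix.fromBlocks R₁ X Xᵀ R₂) *ᵥ v)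
    (α : ℝ) (hα0 : 0 < α) (hα1 : α < 1) (v₁ v₂ : Fin n → ℝ) :
    v₁ ⬝ᵥ R₁ *ᵥ v₁ + v₂ ⬝ᵥ R₂ *ᵥ v₂ + 2 * (v₁ ⬝ᵥ X *ᵥ v₂)
      ≤ (1 / α) * (v₁ ⬝ᵥ R₁ *ᵥ v₁) + (1 / (1 - α)) * (v₂ ⬝ᵥ R₂ *ᵥ v₂) := by
  have h1α : (0:ℝ) < 1 - α := by linarith
  set t := Real.sqrt ((1-α)/α) with ht
  set s := Real.sqrt (α/(1-α)) with hs
  have ht2 : t^2 = (1-α)/α := Real.sq_sqrt (by positivity)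
  have hs2 : s^2 = α/(1-α) := Real.sq_sqrt (by positivity)
  have hts : t * s = 1 := by
    rw [ht, hs, ← Real.sqrt_mul (by positivity)]
    rw [show (1-α)/α * (α/(1-α)) = 1 by field_simp]
    exact Real.sqrt_one
  have hsym : v₂ ⬝ᵥ Xᵀ *ᵥ v₁ = v₁ ⬝ᵥ X *ᵥ v₂ := by
    rw [mulVec_transpose, dotProduct_comm, dotProduct_mulVec]
  have h := hpsd (Sum.elim (t • v₁) (-(s • v₂)))
  simp only [fromBlocks_mulVec, sumElim_dotProduct_sumElim, mulVec_add, mulVec_neg,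
    mulVec_smul, dotProduct_add, dotProduct_neg, neg_dotProduct, smul_dotProduct,
    dotProduct_smul, smul_eq_mul, neg_neg, Sum.elim_comp_inl, Sum.elim_comp_inr] at h
  rw [hsym] at h
  have h' : 0 ≤ t^2 * (v₁ ⬝ᵥ R₁ *ᵥ v₁) + s^2 * (v₂ ⬝ᵥ R₂ *ᵥ v₂) - 2 * (v₁ ⬝ᵥ X *ᵥ v₂) := by
    have hc : t*s*(v₁ ⬝ᵥ X *ᵥ v₂) = v₁ ⬝ᵥ X *ᵥ v₂ := by rw [hts]; ring
    nlinarith [h, hc]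
  rw [ht2, hs2] at h'
  have e1 : (1/α) = 1 + (1-α)/α := by field_simp; ring
  have e2 : (1/(1-α)) = 1 + α/(1-α) := by field_simp; ring
  rw [e1, e2]; ring_nf; ring_nf at h'; linarith
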